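/- Consider the eight closed spherical caps on S^3 ⊂ E^4 of radius π/4 centered at the points (±1/√2, ±1/√2, 0, 0) and (0, 0, ±1/√2, ±1/√2). If C(o, r) is a closed spherical cap (o ∈ S^3, r ∈ (0, π/2)) whose interior is disjoint from the interior of each of these eight caps, then r ≤ π/12. -/

import Mathlib

open scoped RealInnerProductSpace

lemma caps_not_disjoint {E : Type*} [NormedAddCommGroup E] [InnerProductSpace ℝ E]
    (o c : E) (r : ℝ) (ho : ‖o‖ = 1) (hc : ‖c‖ = 1)
    (hr0 : 0 < r) (hr1 : r < Real.pi / 2)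
    (h : Real.cos (r + Real.pi / 4) < ⟪o, c⟫) :
    ¬ Disjoint {x : E | ‖x‖ = 1 ∧ Real.cos r < ⟪x, o⟫}
      {x : E | ‖x‖ = 1 ∧ Real.cos (Real.pi / 4) < ⟪x, c⟫} := by
  have hpi := Real.pi_pos
  rw [Set.not_disjoint_iff]
  by_cases hco : c = o
  · refine ⟨o, ⟨ho, ?_⟩, ⟨ho, ?_⟩⟩
    · rw [real_inner_self_eq_norm_sq, ho]
      have := Real.cos_lt_cos_of_nonneg_of_le_pi le_rfl (by linarith) hr0
      simpa using this
    · rw [hco, real_inner_self_eq_norm_sq, ho]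
      have := Real.cos_lt_cos_of_nonneg_of_le_pi le_rfl (by linarith)
        (by linarith : (0:ℝ) < Real.pi / 4)
      simpa using this
  set t : ℝ := ⟪o, c⟫ with ht
  have ht1 : t ≤ 1 := by
    have := real_inner_le_norm o c
    rw [ho, hc] at this; simpa using this
  have htlt1 : t < 1 := by
    rcases lt_or_eq_of_le ht1 with h' | h'
    · exact h'
    · exfalso
      apply hco
      have hz : ‖c - o‖ ^ 2 = 0 := by
        rw [norm_sub_sq_real, ho, hc, real_inner_comm, ← ht, h']; ring
      have := pow_eq_zero_iff (n := 2) (by norm_num) |>.mp hz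
      rwa [norm_eq_zero, sub_eq_zero] at this
  have htm1 : -1 < t := lt_of_le_of_lt (Real.neg_one_le_cos _) h
  set s : ℝ := Real.sqrt (1 - t ^ 2) with hs
  have hs2 : s ^ 2 = 1 - t ^ 2 := Real.sq_sqrt (by nlinarith)
  have hspos : 0 < s := Real.sqrt_pos.mpr (by nlinarith)
  set u : E := s⁻¹ • (c - t • o) with hu
  have hnorm_cto : ‖c - t • o‖ = s := by
    have h2 : ‖c - t • o‖ ^ 2 = s ^ 2 := by
      rw [norm_sub_sq_real, hc, norm_smul, real_inner_smul_right, real_inner_comm, ← ht,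
        Real.norm_eq_abs, ho]
      nlinarith [hs2, sq_abs t]
    rw [← Real.sqrt_sq (norm_nonneg (c - t • o)), h2, Real.sqrt_sq hspos.le]
  have hou : ⟪o, u⟫ = 0 := by
    rw [hu, real_inner_smul_right, inner_sub_right, real_inner_smul_right,
      real_inner_self_eq_norm_sq, ho]
    simp [← ht]
  have hcu : ⟪c, u⟫ = s := by
    rw [hu, real_inner_smul_right, inner_sub_right, real_inner_smul_right,
      real_inner_self_eq_norm_sq, hc, real_inner_comm, ← ht]
    have h3 : 1 ^ 2 - t * t = s ^ 2 := by nlinarith [hs2]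
    rw [h3]
    field_simp
  have hunorm : ‖u‖ = 1 := by
    rw [hu, norm_smul, hnorm_cto, Real.norm_eq_abs, abs_inv, abs_of_pos hspos]
    field_simp
  -- the angle
  set θ : ℝ := Real.arccos t with hθ
  have hθ0 : 0 ≤ θ := Real.arccos_nonneg t
  have hθpi : θ ≤ Real.pi := Real.arccos_le_pi t
  have hcosθ : Real.cos θ = t := Real.cos_arccos htm1.le ht1
  have hsinθ : Real.sin θ = s := by rw [hθ, Real.sin_arccos, hs]
  have hθlt : θ < r + Real.pi / 4 := by
    by_contra hcon
    push_neg at hcon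
    have := Real.cos_le_cos_of_nonneg_of_le_pi (by linarith) hθpi hcon
    rw [hcosθ] at this
    linarith
  -- choose the interpolation parameter
  set a : ℝ := max 0 (θ - Real.pi / 4) with ha
  set b : ℝ := min r (θ + Real.pi / 4) with hb
  have hab : a < b := by
    apply max_lt <;> apply lt_min <;> linarith
  set α : ℝ := (a + b) / 2 with hα
  have hαa : a < α := by linarith
  have hαb : α < b := by linarith
  have hα0 : 0 ≤ α := le_trans (le_max_left _ _) hαa.le
  have hαr : α < r := lt_of_lt_of_le hαb (min_le_left _ _)
  have h1 : θ - Real.pi / 4 < α := lt_of_le_of_lt (le_max_right _ _) hαa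
  have h2 : α < θ + Real.pi / 4 := lt_of_lt_of_le hαb (min_le_right _ _)
  set x : E := Real.cos α • o + Real.sin α • u with hx
  have hxo : ⟪x, o⟫ = Real.cos α := by
    rw [hx, inner_add_left, real_inner_smul_left, real_inner_smul_left,
      real_inner_self_eq_norm_sq, ho, real_inner_comm, hou]
    ring
  have hxc : ⟪x, c⟫ = Real.cos (θ - α) := by
    rw [hx, inner_add_left, real_inner_smul_left, real_inner_smul_left,
      ← ht, real_inner_comm c u, hcu, Real.cos_sub, hcosθ, hsinθ]
    ring
  have hxn : ‖x‖ = 1 := by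
    have hn : ‖x‖ ^ 2 = 1 := by
      rw [hx, norm_add_sq_real, norm_smul, norm_smul, real_inner_smul_left,
        real_inner_smul_right, hou, Real.norm_eq_abs, Real.norm_eq_abs, ho, hunorm]
      simp only [mul_one, mul_zero, add_zero, mul_pow, sq_abs, one_pow]
      rw [Real.cos_sq_add_sin_sq]
    rw [← Real.sqrt_sq (norm_nonneg x), hn, Real.sqrt_one]
  refine ⟨x, ⟨hxn, ?_⟩, ⟨hxn, ?_⟩⟩
  · rw [hxo]
    exact Real.cos_lt_cos_of_nonneg_of_le_pi hα0 (by linarith) hαr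
  · rw [hxc]
    have habs : |θ - α| < Real.pi / 4 := abs_lt.mpr ⟨by linarith, by linarith⟩
    calc Real.cos (Real.pi / 4) < Real.cos |θ - α| :=
          Real.cos_lt_cos_of_nonneg_of_le_pi (abs_nonneg _) (by linarith) habs
      _ = Real.cos (θ - α) := Real.cos_abs _

/-- The point `(s/√2, t/√2, 0, 0)`-style center: `(1/√2)(s eᵢ + t eⱼ)` in `E⁴`. -/
noncomputable def twoTangentCenter (i j : Fin 4) (s t : ℝ) : EuclideanSpace ℝ (Fin 4) :=
  (Real.sqrt 2)⁻¹ •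
    (s • EuclideanSpace.single i (1 : ℝ) + t • EuclideanSpace.single j (1 : ℝ))

lemma twoTangentCenter_inner (o : EuclideanSpace ℝ (Fin 4)) (i j : Fin 4) (s t : ℝ) :
    ⟪o, twoTangentCenter i j s t⟫ = (Real.sqrt 2)⁻¹ * (s * o i + t * o j) := by
  simp [twoTangentCenter, inner_add_right, inner_smul_right,
    EuclideanSpace.inner_single_right]
  ring

lemma twoTangentCenter_norm (i j : Fin 4) (hij : i ≠ j) (s t : ℝ) (hs : s = 1 ∨ s = -1)
    (ht : t = 1 ∨ t = -1) : ‖twoTangentCenter i j s t‖ = 1 := by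
  have h2 : ‖twoTangentCenter i j s t‖ ^ 2 = 1 := by
    rw [← real_inner_self_eq_norm_sq]
    simp [twoTangentCenter, inner_add_left, inner_add_right, inner_smul_left,
      inner_smul_right, EuclideanSpace.inner_single_left,
      EuclideanSpace.inner_single_right, EuclideanSpace.single_apply, hij, hij.symm, -inner_self_eq_norm_sq_to_K]
    have h2' : (Real.sqrt 2)⁻¹ * (Real.sqrt 2)⁻¹ = 1/2 := by
      rw [← mul_inv, Real.mul_self_sqrt (by norm_num)]
      norm_num
    rcases hs with hs|hs <;> rcases ht with ht|ht <;> subst hs <;> subst ht <;>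
      nlinarith [h2']
  rw [← Real.sqrt_sq (norm_nonneg _), h2, Real.sqrt_one]

set_option maxHeartbeats 1000000 in
/-- If a closed spherical cap `C(o, r)` on `S³ ⊂ E⁴` has interior disjoint
from the interiors of the eight caps of radius `π/4` centered at `(±1/√2, ±1/√2, 0, 0)` and
`(0, 0, ±1/√2, ±1/√2)`, then `r ≤ π/12`. -/
theorem cap_packing_with_eight_twoTangent_caps (o : EuclideanSpace ℝ (Fin 4)) (r : ℝ)
    (ho : ‖o‖ = 1) (hr : r ∈ Set.Ioo 0 (Real.pi / 2))
    (hdisj : ∀ s t : ℝ, (s = 1 ∨ s = -1) → (t = 1 ∨ t = -1) →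
      Disjoint
        {x : EuclideanSpace ℝ (Fin 4) | ‖x‖ = 1 ∧ Real.cos r < ⟪x, o⟫}
        {x : EuclideanSpace ℝ (Fin 4) |
          ‖x‖ = 1 ∧ Real.cos (Real.pi / 4) < ⟪x, twoTangentCenter 0 1 s t⟫} ∧
      Disjoint
        {x : EuclideanSpace ℝ (Fin 4) | ‖x‖ = 1 ∧ Real.cos r < ⟪x, o⟫}
        {x : EuclideanSpace ℝ (Fin 4) |
          ‖x‖ = 1 ∧ Real.cos (Real.pi / 4) < ⟪x, twoTangentCenter 2 3 s t⟫}) :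
    r ≤ Real.pi / 12 := by
  obtain ⟨hr0, hr1⟩ := hr
  have hpi := Real.pi_pos
  set K : ℝ := Real.cos (r + Real.pi / 4) with hK
  have key : ∀ (i j : Fin 4), i = 0 ∧ j = 1 ∨ i = 2 ∧ j = 3 → ∀ s t : ℝ,
      (s = 1 ∨ s = -1) → (t = 1 ∨ t = -1) →
      s * o i + t * o j ≤ Real.sqrt 2 * K := by
    intro i j hij s t hs ht
    have hne : i ≠ j := by
      rcases hij with ⟨hi, hj⟩ | ⟨hi, hj⟩ <;> subst hi <;> subst hj <;> decide
    have hnrm := twoTangentCenter_norm i j hne s t hs ht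
    have hle : ⟪o, twoTangentCenter i j s t⟫ ≤ K := by
      by_contra hlt
      push_neg at hlt
      have hnd := caps_not_disjoint o (twoTangentCenter i j s t) r ho hnrm hr0 hr1 hlt
      rcases hij with ⟨hi, hj⟩ | ⟨hi, hj⟩ <;> subst hi <;> subst hj
      · exact hnd (hdisj s t hs ht).1
      · exact hnd (hdisj s t hs ht).2
    rw [twoTangentCenter_inner] at hle
    have h2 : (0:ℝ) < Real.sqrt 2 := Real.sqrt_pos.mpr (by norm_num)
    have hmul : Real.sqrt 2 * ((Real.sqrt 2)⁻¹ * (s * o i + t * o j)) ≤ Real.sqrt 2 * K :=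
      mul_le_mul_of_nonneg_left hle h2.le
    rwa [← mul_assoc, mul_inv_cancel₀ h2.ne', one_mul] at hmul
  set K' : ℝ := Real.sqrt 2 * K with hK'
  have e01a := key 0 1 (Or.inl ⟨rfl, rfl⟩) 1 1 (Or.inl rfl) (Or.inl rfl)
  have e01b := key 0 1 (Or.inl ⟨rfl, rfl⟩) 1 (-1) (Or.inl rfl) (Or.inr rfl)
  have e01c := key 0 1 (Or.inl ⟨rfl, rfl⟩) (-1) 1 (Or.inr rfl) (Or.inl rfl)
  have e01d := key 0 1 (Or.inl ⟨rfl, rfl⟩) (-1) (-1) (Or.inr rfl) (Or.inr rfl)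
  have e23a := key 2 3 (Or.inr ⟨rfl, rfl⟩) 1 1 (Or.inl rfl) (Or.inl rfl)
  have e23b := key 2 3 (Or.inr ⟨rfl, rfl⟩) 1 (-1) (Or.inl rfl) (Or.inr rfl)
  have e23c := key 2 3 (Or.inr ⟨rfl, rfl⟩) (-1) 1 (Or.inr rfl) (Or.inl rfl)
  have e23d := key 2 3 (Or.inr ⟨rfl, rfl⟩) (-1) (-1) (Or.inr rfl) (Or.inr rfl)
  have hK'0 : 0 ≤ K' := by nlinarith [e01a, e01d]
  have hA : (o 0) ^ 2 + (o 1) ^ 2 ≤ K' ^ 2 := by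
    nlinarith [mul_nonneg (sub_nonneg.2 e01a)
        (by nlinarith [e01d] : 0 ≤ K' + (1 * o 0 + 1 * o 1)),
      mul_nonneg (sub_nonneg.2 e01b)
        (by nlinarith [e01c] : 0 ≤ K' + (1 * o 0 + -1 * o 1))]
  have hB : (o 2) ^ 2 + (o 3) ^ 2 ≤ K' ^ 2 := by
    nlinarith [mul_nonneg (sub_nonneg.2 e23a)
        (by nlinarith [e23d] : 0 ≤ K' + (1 * o 2 + 1 * o 3)),
      mul_nonneg (sub_nonneg.2 e23b)
        (by nlinarith [e23c] : 0 ≤ K' + (1 * o 2 + -1 * o 3))]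
  have hsum : (o 0) ^ 2 + (o 1) ^ 2 + (o 2) ^ 2 + (o 3) ^ 2 = 1 := by
    have h := real_inner_self_eq_norm_sq o
    rw [ho, PiLp.inner_apply] at h
    simp [Fin.sum_univ_four, ← sq] at h
    linarith
  have hK'half : 1 ≤ 2 * K' ^ 2 := by nlinarith
  have hKhalf : (1:ℝ)/2 ≤ K := by
    have h2 : Real.sqrt 2 ^ 2 = 2 := Real.sq_sqrt (by norm_num)
    have h2p : (0:ℝ) < Real.sqrt 2 := Real.sqrt_pos.mpr (by norm_num)
    have hK0 : 0 ≤ K := by nlinarith [hK'0]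
    rw [hK'] at hK'half
    have h4 : (1:ℝ)/4 ≤ K ^ 2 := by nlinarith
    calc (1:ℝ)/2 = Real.sqrt ((1:ℝ)/4) := by
          rw [show (1:ℝ)/4 = (1/2)^2 by norm_num, Real.sqrt_sq (by norm_num)]
      _ ≤ Real.sqrt (K ^ 2) := Real.sqrt_le_sqrt h4
      _ = K := Real.sqrt_sq hK0
  by_contra hcon
  push_neg at hcon
  have hlt : Real.pi / 3 < r + Real.pi / 4 := by linarith
  have hcc := Real.cos_lt_cos_of_nonneg_of_le_pi (by positivity) (by linarith) hlt
  rw [Real.cos_pi_div_three] at hcc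
  rw [← hK] at hcc
  linarith
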